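/- Let n ≥ 1 and k ≥ 1 be integers. Define S = {(x, z, t) ∈ ℝ^n × ℝ^n × ℝ : each z_i ∈ {0,1}, t ≥ ∑_{i=1}^n x_i², ∑_{i=1}^n z_i ≤ k, and x_i = 0 whenever z_i = 0}, and S^c = {(x, z, θ, t) ∈ ℝ^n × ℝ^n × ℝ^n × ℝ : 0 ≤ z_i ≤ 1 and θ_i ≥ 0 for all i, t ≥ ∑_{i=1}^n θ_i, ∑_{i=1}^n z_i ≤ k, and θ_i z_i ≥ x_i² for all i}. Then the closure of the convex hull of S equals the image of S^c under the projection (x, z, θ, t) ↦ (x, z, t). -/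

import Mathlib

open Finset Set Filter

lemma perturb (n k : ℕ) {z d : Fin n → ℝ}
    (hext : ∀ x₁ ∈ {z : Fin n → ℝ | (∀ i, 0 ≤ z i ∧ z i ≤ 1) ∧ ∑ i, z i ≤ (k:ℝ)},
      ∀ x₂ ∈ {z : Fin n → ℝ | (∀ i, 0 ≤ z i ∧ z i ≤ 1) ∧ ∑ i, z i ≤ (k:ℝ)},
      z ∈ openSegment ℝ x₁ x₂ → x₁ = z ∧ x₂ = z)
    (hx : (z - d) ∈ {z : Fin n → ℝ | (∀ i, 0 ≤ z i ∧ z i ≤ 1) ∧ ∑ i, z i ≤ (k:ℝ)})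
    (hy : (z + d) ∈ {z : Fin n → ℝ | (∀ i, 0 ≤ z i ∧ z i ≤ 1) ∧ ∑ i, z i ≤ (k:ℝ)}) :
    d = 0 := by
  have hseg : z ∈ openSegment ℝ (z - d) (z + d) := by
    refine ⟨1/2, 1/2, by norm_num, by norm_num, by norm_num, ?_⟩
    funext l
    simp [Pi.smul_apply, Pi.add_apply, Pi.sub_apply]
    ring
  have := (hext _ hx _ hy hseg).1
  have : z - d = z := this
  funext l
  have := congrFun this l
  simp [Pi.sub_apply] at this
  simpa using this

lemma extpts (n k : ℕ) :
    Set.extremePoints ℝ {z : Fin n → ℝ | (∀ i, 0 ≤ z i ∧ z i ≤ 1) ∧ ∑ i, z i ≤ (k:ℝ)} ⊆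
    {v : Fin n → ℝ | (∀ i, v i = 0 ∨ v i = 1) ∧ ∑ i, v i ≤ (k:ℝ)} := by
  intro z hz
  rw [mem_extremePoints] at hz
  obtain ⟨⟨hbox, hsum⟩, hext⟩ := hz
  refine ⟨?_, hsum⟩
  by_contra hcon
  push_neg at hcon
  obtain ⟨i, hi0, hi1⟩ := hcon
  have hi0' : 0 < z i := lt_of_le_of_ne (hbox i).1 (Ne.symm hi0)
  have hi1' : z i < 1 := lt_of_le_of_ne (hbox i).2 hi1
  rcases eq_or_lt_of_le hsum with heq | hlt
  · -- ∑ z = k : find another fractional coordinate j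
    have hj : ∃ j, j ≠ i ∧ z j ≠ 0 ∧ z j ≠ 1 := by
      by_contra hc
      push_neg at hc
      have hall : ∀ j, j ≠ i → z j = 0 ∨ z j = 1 := by
        intro j hji
        rcases eq_or_ne (z j) 0 with h | h
        · exact Or.inl h
        · exact Or.inr (hc j hji h)
      have hsplit : ∑ j, z j = z i + ∑ j ∈ univ.erase i, z j :=
        (Finset.add_sum_erase _ _ (mem_univ i)).symm
      set m : ℕ := ((univ.erase i).filter (fun j => z j = 1)).card with hm
      have hrest : ∑ j ∈ univ.erase i, z j = (m : ℝ) := by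
        rw [hm, ← Finset.sum_filter_add_sum_filter_not (univ.erase i) (fun j => z j = 1)]
        have h1 : ∑ j ∈ (univ.erase i).filter (fun j => z j = 1), z j
            = (((univ.erase i).filter (fun j => z j = 1)).card : ℝ) := by
          rw [Finset.sum_congr rfl (fun j hj => (Finset.mem_filter.1 hj).2)]
          simp
        have h2 : ∑ j ∈ (univ.erase i).filter (fun j => ¬ z j = 1), z j = 0 := by
          apply Finset.sum_eq_zero
          intro j hj
          obtain ⟨hj1, hj2⟩ := Finset.mem_filter.1 hj
          rcases hall j (Finset.mem_erase.1 hj1).1 with h | h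
          · exact h
          · exact absurd h hj2
        rw [h1, h2, add_zero]
      have hz_i : z i = (k : ℝ) - (m : ℝ) := by
        rw [hsplit, hrest] at heq; linarith
      rcases le_or_gt (m+1) k with h | h
      · have : (1:ℝ) ≤ (k:ℝ) - m := by
          have := (Nat.cast_le (α := ℝ)).2 h; push_cast at this; linarith
        rw [hz_i] at hi1'; linarith
      · have hmk : k ≤ m := Nat.lt_succ_iff.mp h
        have : (k:ℝ) - m ≤ 0 := by
          have := (Nat.cast_le (α := ℝ)).2 hmk; linarith
        rw [hz_i] at hi0'; linarith
    obtain ⟨j, hji, hj0, hj1⟩ := hj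
    have hj0' : 0 < z j := lt_of_le_of_ne (hbox j).1 (Ne.symm hj0)
    have hj1' : z j < 1 := lt_of_le_of_ne (hbox j).2 hj1
    set ε : ℝ := min (min (z i) (1 - z i)) (min (z j) (1 - z j)) with hε
    have hεpos : 0 < ε :=
      lt_min (lt_min hi0' (by linarith)) (lt_min hj0' (by linarith))
    have hεi : ε ≤ z i := le_trans (min_le_left _ _) (min_le_left _ _)
    have hεi' : ε ≤ 1 - z i := le_trans (min_le_left _ _) (min_le_right _ _)
    have hεj : ε ≤ z j := le_trans (min_le_right _ _) (min_le_left _ _)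
    have hεj' : ε ≤ 1 - z j := le_trans (min_le_right _ _) (min_le_right _ _)
    set d : Fin n → ℝ := Pi.single i ε - Pi.single j ε with hd
    have hdsum : ∑ l, d l = 0 := by
      rw [hd]
      simp [Finset.sum_sub_distrib]
    have hdval : ∀ l, d l = if l = i then ε else if l = j then -ε else 0 := by
      intro l
      rcases eq_or_ne l i with rfl | hli
      · simp [hd, Pi.single_apply, Ne.symm hji]
      · rcases eq_or_ne l j with rfl | hlj
        · simp [hd, Pi.single_apply, hli]
        · simp [hd, Pi.single_apply, hli, hlj]
    have hmem : ∀ s : ℝ, s = 1 ∨ s = -1 → (z + s • d) ∈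
        {z : Fin n → ℝ | (∀ i, 0 ≤ z i ∧ z i ≤ 1) ∧ ∑ i, z i ≤ (k:ℝ)} := by
      intro s hs
      constructor
      · intro l
        have hdl := hdval l
        have happ : (z + s • d) l = z l + s * d l := by
          simp [Pi.add_apply, Pi.smul_apply]
        rcases eq_or_ne l i with rfl | hli
        · rw [if_pos rfl] at hdl
          rw [happ, hdl]
          rcases hs with rfl | rfl <;> constructor <;> nlinarith
        · rcases eq_or_ne l j with rfl | hlj
          · rw [if_neg hli, if_pos rfl] at hdl
            rw [happ, hdl]
            rcases hs with rfl | rfl <;> constructor <;> nlinarith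
          · rw [if_neg hli, if_neg hlj] at hdl
            rw [happ, hdl]
            simpa using hbox l
      · have hh : ∑ l, (z + s • d) l = ∑ l, z l + s * ∑ l, d l := by
          simp [Finset.sum_add_distrib, Finset.mul_sum]
        show ∑ l, (z + s • d) l ≤ (k:ℝ)
        rw [hh, hdsum]
        simpa using hsum
    have h1 := hmem 1 (Or.inl rfl)
    have h2 := hmem (-1) (Or.inr rfl)
    have hd0 : d = 0 := by
      apply perturb n k hext
      · have : z - d = z + (-1 : ℝ) • d := by funext l; simp; ring
        rw [this]; exact h2
      · have : z + d = z + (1 : ℝ) • d := by funext l; simp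
        rw [this]; exact h1
    have := congrFun hd0 i
    rw [hdval i] at this
    simp at this
    exact absurd this (ne_of_gt hεpos)
  · -- ∑ z < k : perturb coordinate i alone
    set ε : ℝ := min (min (z i) (1 - z i)) ((k:ℝ) - ∑ l, z l) with hε
    have hεpos : 0 < ε := lt_min (lt_min hi0' (by linarith)) (by linarith)
    have hεi : ε ≤ z i := le_trans (min_le_left _ _) (min_le_left _ _)
    have hεi' : ε ≤ 1 - z i := le_trans (min_le_left _ _) (min_le_right _ _)
    have hεk : ε ≤ (k:ℝ) - ∑ l, z l := min_le_right _ _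
    set d : Fin n → ℝ := Pi.single i ε with hd
    have hd0 : d = 0 := by
      apply perturb n k hext
      · constructor
        · intro l
          rcases eq_or_ne l i with rfl | hli
          · simp [hd, Pi.single_apply]
            constructor <;> nlinarith
          · simp [hd, Pi.single_apply, hli]
            exact hbox l
        · have : ∑ l, (z - d) l = ∑ l, z l - ∑ l, d l := by
            simp [Finset.sum_sub_distrib]
          show ∑ l, (z - d) l ≤ (k:ℝ)
          rw [this, hd]
          simp
          nlinarith
      · constructor
        · intro l
          rcases eq_or_ne l i with rfl | hli
          · simp [hd, Pi.single_apply]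
            constructor <;> nlinarith
          · simp [hd, Pi.single_apply, hli]
            exact hbox l
        · have : ∑ l, (z + d) l = ∑ l, z l + ∑ l, d l := by
            simp [Finset.sum_add_distrib]
          show ∑ l, (z + d) l ≤ (k:ℝ)
          rw [this, hd]
          simp
          nlinarith
    have := congrFun hd0 i
    simp [hd, Pi.single_apply] at this
    exact absurd this (ne_of_gt hεpos)

lemma poly_sub (n k : ℕ) :
    {z : Fin n → ℝ | (∀ i, 0 ≤ z i ∧ z i ≤ 1) ∧ ∑ i, z i ≤ (k:ℝ)} ⊆
    convexHull ℝ {v : Fin n → ℝ | (∀ i, v i = 0 ∨ v i = 1) ∧ ∑ i, v i ≤ (k:ℝ)} := by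
  set P := {z : Fin n → ℝ | (∀ i, 0 ≤ z i ∧ z i ≤ 1) ∧ ∑ i, z i ≤ (k:ℝ)} with hP
  set V := {v : Fin n → ℝ | (∀ i, v i = 0 ∨ v i = 1) ∧ ∑ i, v i ≤ (k:ℝ)} with hV
  have hVfin : V.Finite := by
    apply Set.Finite.subset (Set.Finite.pi (fun i : Fin n => (Set.finite_singleton (0:ℝ)).insert 1))
    intro v hv
    simp only [Set.mem_pi, Set.mem_univ, forall_true_left]
    intro i
    rcases hv.1 i with h | h <;> simp [h]
  have hPclosed : IsClosed P := by
    have h1 : IsClosed {z : Fin n → ℝ | ∀ i, 0 ≤ z i ∧ z i ≤ 1} := by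
      have : {z : Fin n → ℝ | ∀ i, 0 ≤ z i ∧ z i ≤ 1}
          = ⋂ i, ({z : Fin n → ℝ | 0 ≤ z i} ∩ {z | z i ≤ 1}) := by
        ext z; simp [Set.mem_iInter]
      rw [this]
      exact isClosed_iInter fun i =>
        (isClosed_le continuous_const (continuous_apply i)).inter
          (isClosed_le (continuous_apply i) continuous_const)
    have h2 : IsClosed {z : Fin n → ℝ | ∑ i, z i ≤ (k:ℝ)} :=
      isClosed_le (by continuity) continuous_const
    exact h1.inter h2
  have hPcompact : IsCompact P := by
    have hsub : P ⊆ Set.Icc (0 : Fin n → ℝ) 1 := by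
      intro z hz
      constructor <;> intro i
      · exact (hz.1 i).1
      · exact (hz.1 i).2
    exact (isCompact_Icc).of_isClosed_subset hPclosed hsub
  have hPconv : Convex ℝ P := by
    intro z1 h1 z2 h2 a b ha hb hab
    constructor
    · intro i
      have e : (a • z1 + b • z2) i = a * z1 i + b * z2 i := by simp
      rw [e]
      constructor
      · have := (h1.1 i).1; have := (h2.1 i).1; positivity
      · nlinarith [(h1.1 i).2, (h2.1 i).2, (h1.1 i).1, (h2.1 i).1]
    · have e : ∑ i, (a • z1 + b • z2) i = a * ∑ i, z1 i + b * ∑ i, z2 i := by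
        simp [Finset.sum_add_distrib, Finset.mul_sum]
      rw [e]
      nlinarith [h1.2, h2.2]
  intro z hz
  have := closure_convexHull_extremePoints hPcompact hPconv
  have hz' : z ∈ closure (convexHull ℝ (Set.extremePoints ℝ P)) := by rw [this]; exact hz
  have hmono : closure (convexHull ℝ (Set.extremePoints ℝ P)) ⊆ closure (convexHull ℝ V) :=
    closure_mono (convexHull_mono (extpts n k))
  have hcl : closure (convexHull ℝ V) = convexHull ℝ V :=
    ((hVfin.isCompact_convexHull (𝕜 := ℝ)).isClosed).closure_eq
  exact hcl ▸ hmono hz'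

lemma soc {a b x1 x2 t1 t2 z1 z2 : ℝ} (ha : 0 ≤ a) (hb : 0 ≤ b)
    (h1 : x1^2 ≤ t1 * z1) (h2 : x2^2 ≤ t2 * z2)
    (hz1 : 0 ≤ z1) (hz2 : 0 ≤ z2) (ht1 : 0 ≤ t1) (ht2 : 0 ≤ t2) :
    (a*x1 + b*x2)^2 ≤ (a*t1 + b*t2) * (a*z1 + b*z2) := by
  have huv : x1^2 * x2^2 ≤ (t1*z2) * (t2*z1) := by
    calc x1^2 * x2^2 ≤ (t1*z1) * (t2*z2) :=
          mul_le_mul h1 h2 (sq_nonneg x2) (mul_nonneg ht1 hz1)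
      _ = (t1*z2) * (t2*z1) := by ring
  have hu : 0 ≤ t1*z2 := mul_nonneg ht1 hz2
  have hv : 0 ≤ t2*z1 := mul_nonneg ht2 hz1
  have key : 2*(x1*x2) ≤ t1*z2 + t2*z1 := by
    rcases le_or_gt (t1*z2 + t2*z1 + 2*(x1*x2)) 0 with h | h
    · nlinarith
    · nlinarith [sq_nonneg (t1*z2 - t2*z1)]
  nlinarith [mul_nonneg (mul_nonneg ha hb) (sub_nonneg.2 key),
    mul_nonneg (sq_nonneg a) (sub_nonneg.2 h1),
    mul_nonneg (sq_nonneg b) (sub_nonneg.2 h2)]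

lemma img_convex (n k : ℕ) :
    Convex ℝ ((fun q : (Fin n → ℝ) × (Fin n → ℝ) × (Fin n → ℝ) × ℝ => (q.1, q.2.1, q.2.2.2)) ''
      {q | (∀ i, 0 ≤ q.2.1 i ∧ q.2.1 i ≤ 1) ∧
           (∀ i, 0 ≤ q.2.2.1 i) ∧
           (∑ i, q.2.2.1 i) ≤ q.2.2.2 ∧
           (∑ i, q.2.1 i) ≤ (k : ℝ) ∧
           ∀ i, (q.1 i) ^ 2 ≤ q.2.2.1 i * q.2.1 i}) := by
  rintro p ⟨r, ⟨hr1, hr2, hr3, hr4, hr5⟩, rfl⟩ q ⟨s, ⟨hs1, hs2, hs3, hs4, hs5⟩, rfl⟩ a b ha hb hab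
  refine ⟨a • r + b • s, ⟨?_, ?_, ?_, ?_, ?_⟩, ?_⟩
  · intro i
    have e : (a • r + b • s).2.1 i = a * r.2.1 i + b * s.2.1 i := by simp
    rw [e]
    constructor
    · have := (hr1 i).1; have := (hs1 i).1; positivity
    · nlinarith [(hr1 i).2, (hs1 i).2, (hr1 i).1, (hs1 i).1]
  · intro i
    have e : (a • r + b • s).2.2.1 i = a * r.2.2.1 i + b * s.2.2.1 i := by simp
    rw [e]
    have := hr2 i; have := hs2 i; positivity
  · have e1 : ∑ i, (a • r + b • s).2.2.1 i = a * ∑ i, r.2.2.1 i + b * ∑ i, s.2.2.1 i := by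
      simp [Finset.sum_add_distrib, Finset.mul_sum]
    have e2 : (a • r + b • s).2.2.2 = a * r.2.2.2 + b * s.2.2.2 := by simp
    rw [e1, e2]
    nlinarith [hr3, hs3]
  · have e : ∑ i, (a • r + b • s).2.1 i = a * ∑ i, r.2.1 i + b * ∑ i, s.2.1 i := by
      simp [Finset.sum_add_distrib, Finset.mul_sum]
    rw [e]
    nlinarith [hr4, hs4]
  · intro i
    have e1 : (a • r + b • s).1 i = a * r.1 i + b * s.1 i := by simp
    have e2 : (a • r + b • s).2.2.1 i = a * r.2.2.1 i + b * s.2.2.1 i := by simp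
    have e3 : (a • r + b • s).2.1 i = a * r.2.1 i + b * s.2.1 i := by simp
    rw [e1, e2, e3]
    exact soc ha hb (hr5 i) (hs5 i) (hr1 i).1 (hs1 i).1 (hr2 i) (hs2 i)
  · simp

def Dset (n k : ℕ) : Set ((Fin n → ℝ) × (Fin n → ℝ) × ℝ) :=
  {p | (∀ i, 0 ≤ p.2.1 i ∧ p.2.1 i ≤ 1) ∧ (∑ i, p.2.1 i) ≤ (k:ℝ) ∧
    ∀ ε > (0:ℝ), ∑ i, (p.1 i)^2 / (max (p.2.1 i) 0 + ε) ≤ p.2.2}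

lemma Dset_closed (n k : ℕ) : IsClosed (Dset n k) := by
  have : Dset n k = ((⋂ i, ({p : (Fin n → ℝ) × (Fin n → ℝ) × ℝ | 0 ≤ p.2.1 i}
        ∩ {p | p.2.1 i ≤ 1})) ∩ {p | ∑ i, p.2.1 i ≤ (k:ℝ)}) ∩
      ⋂ ε ∈ Set.Ioi (0:ℝ), {p : (Fin n → ℝ) × (Fin n → ℝ) × ℝ |
        ∑ i, (p.1 i)^2 / (max (p.2.1 i) 0 + ε) ≤ p.2.2} := by
    ext p
    simp only [Dset, Set.mem_inter_iff, Set.mem_iInter, Set.mem_setOf_eq, Set.mem_Ioi]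
    constructor
    · rintro ⟨h1, h2, h3⟩
      exact ⟨⟨fun i => ⟨(h1 i).1, (h1 i).2⟩, h2⟩, fun ε hε => h3 ε hε⟩
    · rintro ⟨⟨h1, h2⟩, h3⟩
      exact ⟨fun i => ⟨(h1 i).1, (h1 i).2⟩, h2, fun ε hε => h3 ε hε⟩
  rw [this]
  have hz : ∀ i : Fin n, Continuous fun p : (Fin n → ℝ) × (Fin n → ℝ) × ℝ => p.2.1 i :=
    fun i => (continuous_apply i).comp (continuous_fst.comp continuous_snd)
  have hx : ∀ i : Fin n, Continuous fun p : (Fin n → ℝ) × (Fin n → ℝ) × ℝ => p.1 i :=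
    fun i => (continuous_apply i).comp continuous_fst
  refine IsClosed.inter (IsClosed.inter ?_ ?_) ?_
  · exact isClosed_iInter fun i =>
      (isClosed_le continuous_const (hz i)).inter (isClosed_le (hz i) continuous_const)
  · exact isClosed_le (by exact continuous_finset_sum _ (fun i _ => hz i)) continuous_const
  · refine isClosed_biInter fun ε hε => ?_
    refine isClosed_le ?_ (continuous_snd.comp continuous_snd)
    apply continuous_finset_sum
    intro i _
    apply Continuous.div
    · exact (hx i).pow 2
    · exact ((hz i).max continuous_const).add continuous_const
    · intro p
      have : (0:ℝ) ≤ max (p.2.1 i) 0 := le_max_right _ _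
      have hε' : (0:ℝ) < ε := hε
      positivity

lemma img_sub_D (n k : ℕ) :
    ((fun q : (Fin n → ℝ) × (Fin n → ℝ) × (Fin n → ℝ) × ℝ => (q.1, q.2.1, q.2.2.2)) ''
      {q | (∀ i, 0 ≤ q.2.1 i ∧ q.2.1 i ≤ 1) ∧
           (∀ i, 0 ≤ q.2.2.1 i) ∧
           (∑ i, q.2.2.1 i) ≤ q.2.2.2 ∧
           (∑ i, q.2.1 i) ≤ (k : ℝ) ∧
           ∀ i, (q.1 i) ^ 2 ≤ q.2.2.1 i * q.2.1 i}) ⊆ Dset n k := by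
  rintro p ⟨q, ⟨h1, h2, h3, h4, h5⟩, rfl⟩
  refine ⟨h1, h4, ?_⟩
  intro ε hε
  have hterm : ∀ i, (q.1 i)^2 / (max (q.2.1 i) 0 + ε) ≤ q.2.2.1 i := by
    intro i
    have hmax : max (q.2.1 i) 0 = q.2.1 i := max_eq_left (h1 i).1
    rw [hmax, div_le_iff₀ (by linarith [(h1 i).1])]
    have := h5 i
    nlinarith [h2 i, (h1 i).1]
  calc ∑ i, (q.1 i)^2 / (max (q.2.1 i) 0 + ε) ≤ ∑ i, q.2.2.1 i :=
        Finset.sum_le_sum fun i _ => hterm i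
    _ ≤ q.2.2.2 := h3

lemma D_sub_img (n k : ℕ) : Dset n k ⊆
    ((fun q : (Fin n → ℝ) × (Fin n → ℝ) × (Fin n → ℝ) × ℝ => (q.1, q.2.1, q.2.2.2)) ''
      {q | (∀ i, 0 ≤ q.2.1 i ∧ q.2.1 i ≤ 1) ∧
           (∀ i, 0 ≤ q.2.2.1 i) ∧
           (∑ i, q.2.2.1 i) ≤ q.2.2.2 ∧
           (∑ i, q.2.1 i) ≤ (k : ℝ) ∧
           ∀ i, (q.1 i) ^ 2 ≤ q.2.2.1 i * q.2.1 i}) := by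
  rintro ⟨x, z, t⟩ ⟨h1, h2, h3⟩
  simp only at h1 h2 h3
  -- each single term is bounded by t
  have hterm : ∀ i, ∀ ε > (0:ℝ), (x i)^2 / (max (z i) 0 + ε) ≤ t := by
    intro i ε hε
    refine le_trans ?_ (h3 ε hε)
    apply Finset.single_le_sum (f := fun i => (x i)^2 / (max (z i) 0 + ε)) ?_ (mem_univ i)
    intro j _
    have : (0:ℝ) ≤ max (z j) 0 := le_max_right _ _
    positivity
  -- if z i = 0 then x i = 0
  have hzero : ∀ i, z i = 0 → x i = 0 := by
    intro i hzi
    have hb : ∀ ε > (0:ℝ), (x i)^2 ≤ t * ε := by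
      intro ε hε
      have := hterm i ε hε
      rw [hzi] at this
      simp only [max_self, zero_add] at this
      calc (x i)^2 = ((x i)^2/ε) * ε := by field_simp
        _ ≤ t * ε := by
            apply mul_le_mul_of_nonneg_right _ (le_of_lt hε)
            simpa using this
    have hx2 : (x i)^2 ≤ 0 := by
      rcases le_or_gt t 0 with ht | ht
      · have := hb 1 one_pos; nlinarith
      · by_contra hc
        push_neg at hc
        have hpos : 0 < (x i)^2 := hc
        have := hb ((x i)^2/(2*t)) (by positivity)
        have h2t : t * ((x i)^2/(2*t)) = (x i)^2/2 := by field_simp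
        rw [h2t] at this
        nlinarith
    nlinarith [sq_nonneg (x i)]
  -- define θ
  set θ : Fin n → ℝ := fun i => if z i = 0 then 0 else (x i)^2 / z i with hθ
  have hθnn : ∀ i, 0 ≤ θ i := by
    intro i
    rw [hθ]
    by_cases h : z i = 0
    · simp [h]
    · simp only [h, if_false]
      have : 0 < z i := lt_of_le_of_ne (h1 i).1 (Ne.symm h)
      positivity
  have hθsum : ∑ i, θ i ≤ t := by
    have htend : Tendsto (fun ε : ℝ => ∑ i, (x i)^2 / (max (z i) 0 + ε))
        (nhdsWithin 0 (Set.Ioi 0)) (nhds (∑ i, θ i)) := by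
      apply tendsto_finset_sum
      intro i _
      by_cases h : z i = 0
      · have hx0 : x i = 0 := hzero i h
        have : (fun ε : ℝ => (x i)^2 / (max (z i) 0 + ε)) = fun ε => 0 := by
          funext ε; rw [hx0]; simp
        rw [this, hθ]
        simp [h]
      · have hzi : 0 < z i := lt_of_le_of_ne (h1 i).1 (Ne.symm h)
        have hmax : max (z i) 0 = z i := max_eq_left (le_of_lt hzi)
        have h1t : Tendsto (fun ε : ℝ => max (z i) 0 + ε) (nhdsWithin 0 (Set.Ioi 0))
            (nhds (z i)) := by
          rw [hmax]
          have : Tendsto (fun ε : ℝ => ε) (nhdsWithin 0 (Set.Ioi 0)) (nhds 0) :=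
            tendsto_id.mono_left nhdsWithin_le_nhds
          simpa using tendsto_const_nhds.add this
        have : Tendsto (fun ε : ℝ => (x i)^2 / (max (z i) 0 + ε)) (nhdsWithin 0 (Set.Ioi 0))
            (nhds ((x i)^2 / z i)) := tendsto_const_nhds.div h1t (ne_of_gt hzi)
        have hθi : θ i = (x i)^2 / z i := by rw [hθ]; simp [h]
        rw [hθi]
        exact this
    apply le_of_tendsto htend
    filter_upwards [self_mem_nhdsWithin] with ε hε
    exact h3 ε hε
  refine ⟨(x, z, θ, t), ⟨h1, hθnn, hθsum, h2, ?_⟩, rfl⟩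
  intro i
  show (x i)^2 ≤ θ i * z i
  by_cases h : z i = 0
  · rw [h, hzero i h]
    simp
  · have hzi : 0 < z i := lt_of_le_of_ne (h1 i).1 (Ne.symm h)
    have hθi : θ i = (x i)^2 / z i := by rw [hθ]; simp [h]
    rw [hθi, div_mul_cancel₀ _ (ne_of_gt hzi)]

lemma img_sub_hull (n k : ℕ) :
    ((fun q : (Fin n → ℝ) × (Fin n → ℝ) × (Fin n → ℝ) × ℝ => (q.1, q.2.1, q.2.2.2)) ''
      {q | (∀ i, 0 ≤ q.2.1 i ∧ q.2.1 i ≤ 1) ∧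
           (∀ i, 0 ≤ q.2.2.1 i) ∧
           (∑ i, q.2.2.1 i) ≤ q.2.2.2 ∧
           (∑ i, q.2.1 i) ≤ (k : ℝ) ∧
           ∀ i, (q.1 i) ^ 2 ≤ q.2.2.1 i * q.2.1 i}) ⊆
    convexHull ℝ
      {q : (Fin n → ℝ) × (Fin n → ℝ) × ℝ |
        (∀ i, q.2.1 i = 0 ∨ q.2.1 i = 1) ∧
        (∑ i, (q.1 i) ^ 2) ≤ q.2.2 ∧
        (∑ i, q.2.1 i) ≤ (k : ℝ) ∧
        ∀ i, q.2.1 i = 0 → q.1 i = 0} := by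
  rintro p ⟨⟨x, z, θ, t⟩, ⟨h1, h2, h3, h4, h5⟩, rfl⟩
  simp only at h1 h2 h3 h4 h5 ⊢
  -- define the ratios
  set c : Fin n → ℝ := fun i => if z i = 0 then 0 else x i / z i with hc
  have hxc : ∀ i, x i = c i * z i := by
    intro i
    rw [hc]
    by_cases h : z i = 0
    · simp only [h, if_pos, mul_zero]
      have := h5 i
      rw [h, mul_zero] at this
      nlinarith [sq_nonneg (x i)]
    · simp only [h, if_false]
      field_simp
  have hcz : ∀ i, (c i)^2 * z i ≤ θ i := by
    intro i
    rw [hc]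
    by_cases h : z i = 0
    · simpa [h] using h2 i
    · have hzi : 0 < z i := lt_of_le_of_ne (h1 i).1 (Ne.symm h)
      simp only [h, if_false]
      have e : (x i / z i)^2 * z i = (x i)^2 / z i := by field_simp
      rw [e, div_le_iff₀ hzi]
      exact h5 i
  set s0 : ℝ := t - ∑ i, (c i)^2 * z i with hs0
  have hs0nn : 0 ≤ s0 := by
    have : ∑ i, (c i)^2 * z i ≤ ∑ i, θ i := Finset.sum_le_sum fun i _ => hcz i
    rw [hs0]
    linarith
  -- decompose z
  have hzP : z ∈ convexHull ℝ {v : Fin n → ℝ | (∀ i, v i = 0 ∨ v i = 1) ∧ ∑ i, v i ≤ (k:ℝ)} :=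
    poly_sub n k ⟨h1, h4⟩
  rw [_root_.convexHull_eq] at hzP
  obtain ⟨ι, T, w, f, hw0, hw1, hfV, hcm⟩ := hzP
  rw [Finset.centerMass_eq_of_sum_1 _ _ hw1] at hcm
  have hzi : ∀ i, ∑ j ∈ T, w j * f j i = z i := by
    intro i
    rw [← hcm]
    simp [Finset.sum_apply]
  set F : ι → (Fin n → ℝ) × (Fin n → ℝ) × ℝ :=
    fun j => (fun i => c i * f j i, f j, (∑ i, (c i)^2 * f j i) + s0) with hF
  have hmem : ∀ j ∈ T, F j ∈ {q : (Fin n → ℝ) × (Fin n → ℝ) × ℝ |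
        (∀ i, q.2.1 i = 0 ∨ q.2.1 i = 1) ∧
        (∑ i, (q.1 i) ^ 2) ≤ q.2.2 ∧
        (∑ i, q.2.1 i) ≤ (k : ℝ) ∧
        ∀ i, q.2.1 i = 0 → q.1 i = 0} := by
    intro j hj
    obtain ⟨hv1, hv2⟩ := hfV j hj
    refine ⟨hv1, ?_, hv2, ?_⟩
    · have e : ∀ i, (c i * f j i)^2 = (c i)^2 * f j i := by
        intro i
        rcases hv1 i with h | h <;> rw [h] <;> ring
      show ∑ i, (c i * f j i)^2 ≤ (∑ i, (c i)^2 * f j i) + s0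
      rw [Finset.sum_congr rfl fun i _ => e i]
      linarith
    · intro i hi
      have hfi : f j i = 0 := hi
      show c i * f j i = 0
      rw [hfi, mul_zero]
  have hsum : ∑ j ∈ T, w j • F j = (x, z, t) := by
    have hsum1 : (∑ j ∈ T, w j • F j).1 = x := by
      rw [Prod.fst_sum]
      funext i
      rw [Finset.sum_apply]
      have e : ∀ j, (w j • F j).1 i = w j * (c i * f j i) := by
        intro j; simp [hF]
      rw [Finset.sum_congr rfl fun j _ => e j]
      have : ∑ j ∈ T, w j * (c i * f j i) = c i * ∑ j ∈ T, w j * f j i := by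
        rw [Finset.mul_sum]
        exact Finset.sum_congr rfl fun j _ => by ring
      rw [this, hzi i, ← hxc i]
    have hsum2 : (∑ j ∈ T, w j • F j).2.1 = z := by
      rw [Prod.snd_sum, Prod.fst_sum]
      funext i
      rw [Finset.sum_apply]
      have e : ∀ j, (w j • F j).2.1 i = w j * f j i := by
        intro j; simp [hF]
      rw [Finset.sum_congr rfl fun j _ => e j, hzi i]
    have hsum3 : (∑ j ∈ T, w j • F j).2.2 = t := by
      rw [Prod.snd_sum, Prod.snd_sum]
      have e : ∀ j, (w j • F j).2.2 = (∑ i, w j * ((c i)^2 * f j i)) + w j * s0 := by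
        intro j
        simp only [hF, Prod.smul_snd, smul_eq_mul]
        rw [mul_add, Finset.mul_sum]
      rw [Finset.sum_congr rfl fun j _ => e j, Finset.sum_add_distrib]
      rw [Finset.sum_comm]
      have e2 : ∀ i, ∑ j ∈ T, w j * ((c i)^2 * f j i) = (c i)^2 * z i := by
        intro i
        rw [← hzi i, Finset.mul_sum]
        exact Finset.sum_congr rfl fun j _ => by ring
      rw [Finset.sum_congr rfl fun i _ => e2 i, ← Finset.sum_mul, hw1, one_mul, hs0]
      ring
    exact Prod.ext hsum1 (Prod.ext hsum2 hsum3)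
  have : (x, z, t) = T.centerMass w F := by
    rw [Finset.centerMass_eq_of_sum_1 _ _ hw1, hsum]
  rw [this]
  exact Finset.centerMass_mem_convexHull T hw0 (by rw [hw1]; norm_num) hmem


lemma S_sub_img (n k : ℕ) :
    {q : (Fin n → ℝ) × (Fin n → ℝ) × ℝ |
        (∀ i, q.2.1 i = 0 ∨ q.2.1 i = 1) ∧
        (∑ i, (q.1 i) ^ 2) ≤ q.2.2 ∧
        (∑ i, q.2.1 i) ≤ (k : ℝ) ∧
        ∀ i, q.2.1 i = 0 → q.1 i = 0} ⊆
    ((fun q : (Fin n → ℝ) × (Fin n → ℝ) × (Fin n → ℝ) × ℝ => (q.1, q.2.1, q.2.2.2)) ''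
      {q | (∀ i, 0 ≤ q.2.1 i ∧ q.2.1 i ≤ 1) ∧
           (∀ i, 0 ≤ q.2.2.1 i) ∧
           (∑ i, q.2.2.1 i) ≤ q.2.2.2 ∧
           (∑ i, q.2.1 i) ≤ (k : ℝ) ∧
           ∀ i, (q.1 i) ^ 2 ≤ q.2.2.1 i * q.2.1 i}) := by
  rintro ⟨x, z, t⟩ ⟨h1, h2, h3, h4⟩
  simp only at h1 h2 h3 h4
  refine ⟨(x, z, fun i => (x i)^2, t), ⟨?_, ?_, ?_, ?_, ?_⟩, rfl⟩
  · intro i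
    show 0 ≤ z i ∧ z i ≤ 1
    rcases h1 i with h | h <;> rw [h] <;> norm_num
  · intro i
    exact sq_nonneg (x i)
  · exact h2
  · exact h3
  · intro i
    show (x i)^2 ≤ (x i)^2 * z i
    rcases h1 i with h | h
    · rw [h4 i h, h]; norm_num
    · rw [h]; ring_nf; exact le_refl _

/-- Lemma 2 (Günlük–Linderoth perspective reformulation): the closed convex hull of
`S` equals the projection of `S^c` onto the `(x, z, t)` coordinates. -/
theorem stmt18 (n k : ℕ) (hn : 1 ≤ n) (hk : 1 ≤ k) :
    closure (convexHull ℝ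
      {q : (Fin n → ℝ) × (Fin n → ℝ) × ℝ |
        (∀ i, q.2.1 i = 0 ∨ q.2.1 i = 1) ∧
        (∑ i, (q.1 i) ^ 2) ≤ q.2.2 ∧
        (∑ i, q.2.1 i) ≤ (k : ℝ) ∧
        ∀ i, q.2.1 i = 0 → q.1 i = 0}) =
    (fun q : (Fin n → ℝ) × (Fin n → ℝ) × (Fin n → ℝ) × ℝ => (q.1, q.2.1, q.2.2.2)) ''
      {q | (∀ i, 0 ≤ q.2.1 i ∧ q.2.1 i ≤ 1) ∧
           (∀ i, 0 ≤ q.2.2.1 i) ∧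
           (∑ i, q.2.2.1 i) ≤ q.2.2.2 ∧
           (∑ i, q.2.1 i) ≤ (k : ℝ) ∧
           ∀ i, (q.1 i) ^ 2 ≤ q.2.2.1 i * q.2.1 i} := by
  have himgD : ((fun q : (Fin n → ℝ) × (Fin n → ℝ) × (Fin n → ℝ) × ℝ => (q.1, q.2.1, q.2.2.2)) ''
      {q | (∀ i, 0 ≤ q.2.1 i ∧ q.2.1 i ≤ 1) ∧
           (∀ i, 0 ≤ q.2.2.1 i) ∧
           (∑ i, q.2.2.1 i) ≤ q.2.2.2 ∧
           (∑ i, q.2.1 i) ≤ (k : ℝ) ∧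
           ∀ i, (q.1 i) ^ 2 ≤ q.2.2.1 i * q.2.1 i}) = Dset n k :=
    Set.Subset.antisymm (img_sub_D n k) (D_sub_img n k)
  apply Set.Subset.antisymm
  · apply closure_minimal
    · exact convexHull_min (S_sub_img n k) (img_convex n k)
    · rw [himgD]
      exact Dset_closed n k
  · exact fun p hp => subset_closure (convexHull_mono (fun q hq => hq) (img_sub_hull n k hp))
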